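/- Fix positive reals t, α, β, η, L with ηL < 1, and define on the interval 0 < K < t/β the function g(K) = η·φ·γ(K)·(1 − (ηL/2)·(γ(K)/K − 1)), where γ(K) = (t − Kβ)/α and φ > 0 is a constant. Then g is maximized (its derivative vanishes) at K* = t / sqrt(2αβ/(ηL) + αβ + β²), i.e., dg/dK = (ηL t²)/(2αK²) − (β + ηLβ²/(2α) + ηLβ/2), which is zero precisely at K = K*. -/

import Mathlib

open Set

/-- Theorem 3: with `γ(K) = (t − Kβ)/α` and
`g(K) = ηφ·γ(K)·(1 − (ηL/2)(γ(K)/K − 1))`, the derivative of `g` on `(0, t/β)` is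
`(ηφ/α)·[ηLt²/(2αK²) − (β + ηLβ²/(2α) + ηLβ/2)]`, and it vanishes precisely at
`K* = t / √(2αβ/(ηL) + αβ + β²)`. -/
theorem stmt_3 (t α β η L φ : ℝ) (ht : 0 < t) (hα : 0 < α) (hβ : 0 < β)
    (hη : 0 < η) (hL : 0 < L) (hηL : η * L < 1) (hφ : 0 < φ) :
    ∀ K ∈ Ioo (0 : ℝ) (t / β),
      HasDerivAt
        (fun K : ℝ =>
          η * φ * ((t - K * β) / α) *
            (1 - η * L / 2 * (((t - K * β) / α) / K - 1)))
        (η * φ / α *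
          (η * L * t ^ 2 / (2 * α * K ^ 2) -
            (β + η * L * β ^ 2 / (2 * α) + η * L * β / 2))) K ∧
      (η * φ / α *
          (η * L * t ^ 2 / (2 * α * K ^ 2) -
            (β + η * L * β ^ 2 / (2 * α) + η * L * β / 2)) = 0 ↔
        K = t / Real.sqrt (2 * α * β / (η * L) + α * β + β ^ 2)) := by
  intro K hK
  obtain ⟨hK0, hKt⟩ := hK
  have hKne : K ≠ 0 := ne_of_gt hK0
  have hαne : α ≠ 0 := ne_of_gt hα
  have hηL0 : 0 < η * L := mul_pos hη hL
  constructor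
  · -- derivative computation
    have h1 : HasDerivAt (fun K : ℝ => (t - K * β) / α) (-β / α) K := by
      have : HasDerivAt (fun K : ℝ => t - K * β) (-β) K := by
        simpa using ((hasDerivAt_id K).mul_const β).const_sub t
      simpa using this.div_const α
    have h2 : HasDerivAt (fun K : ℝ => (K : ℝ)⁻¹) (-(K ^ 2)⁻¹) K :=
      hasDerivAt_inv hKne
    have hγK : HasDerivAt (fun K : ℝ => ((t - K * β) / α) * K⁻¹)
        ((-β / α) * K⁻¹ + ((t - K * β) / α) * (-(K ^ 2)⁻¹)) K := h1.mul h2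
    have hinner : HasDerivAt
        (fun K : ℝ => 1 - η * L / 2 * (((t - K * β) / α) * K⁻¹ - 1))
        (-(η * L / 2 * ((-β / α) * K⁻¹ + ((t - K * β) / α) * (-(K ^ 2)⁻¹)))) K := by
      exact ((hγK.sub_const 1).const_mul (η * L / 2)).const_sub 1
    have hfull : HasDerivAt
        (fun K : ℝ => (η * φ * ((t - K * β) / α)) *
          (1 - η * L / 2 * (((t - K * β) / α) * K⁻¹ - 1)))
        ((η * φ * (-β / α)) * (1 - η * L / 2 * (((t - K * β) / α) * K⁻¹ - 1)) +
          (η * φ * ((t - K * β) / α)) *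
            (-(η * L / 2 * ((-β / α) * K⁻¹ + ((t - K * β) / α) * (-(K ^ 2)⁻¹))))) K :=
      (h1.const_mul (η * φ)).mul hinner
    have heq : (fun K : ℝ => (η * φ * ((t - K * β) / α)) *
          (1 - η * L / 2 * (((t - K * β) / α) * K⁻¹ - 1))) =
        (fun K : ℝ => η * φ * ((t - K * β) / α) *
          (1 - η * L / 2 * (((t - K * β) / α) / K - 1))) := by
      funext x; ring
    rw [heq] at hfull
    convert hfull using 1
    field_simp
    ring
  · -- vanishing point
    set s : ℝ := 2 * α * β / (η * L) + α * β + β ^ 2 with hs_def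
    have hs : 0 < s := by positivity
    have hsq : Real.sqrt s ^ 2 = s := Real.sq_sqrt hs.le
    have hsqrt : 0 < Real.sqrt s := Real.sqrt_pos.mpr hs
    have hK₀ : 0 < t / Real.sqrt s := div_pos ht hsqrt
    constructor
    · intro h
      have hcoef : η * φ / α ≠ 0 := by positivity
      have hbr : η * L * t ^ 2 / (2 * α * K ^ 2) -
          (β + η * L * β ^ 2 / (2 * α) + η * L * β / 2) = 0 :=
        (mul_eq_zero.mp h).resolve_left hcoef
      -- derive K^2 * s = t^2
      have hK2 : K ^ 2 * s = t ^ 2 := by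
        have h0 := sub_eq_zero.mp hbr
        field_simp at h0
        have h0' : η * L * t ^ 2 = (2 * α * β + η * L * β ^ 2 + α * η * L * β) * K ^ 2 := by
          have h4 : (4 * α) ≠ 0 := by positivity
          apply mul_left_cancel₀ h4
          linear_combination (4 * α) * h0
        have hs' : η * L * s = 2 * α * β + η * L * α * β + η * L * β ^ 2 := by
          rw [hs_def]
          field_simp
        apply mul_left_cancel₀ (ne_of_gt hηL0)
        linear_combination K ^ 2 * hs' - h0'
      have hK₀2 : (t / Real.sqrt s) ^ 2 * s = t ^ 2 := by
        rw [div_pow, hsq]; field_simp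
      have : K ^ 2 = (t / Real.sqrt s) ^ 2 := by
        have := hK2.trans hK₀2.symm
        exact mul_right_cancel₀ (ne_of_gt hs) this
      calc K = Real.sqrt (K ^ 2) := (Real.sqrt_sq hK0.le).symm
        _ = Real.sqrt ((t / Real.sqrt s) ^ 2) := by rw [this]
        _ = t / Real.sqrt s := Real.sqrt_sq hK₀.le
    · intro h
      subst h
      have hbr : η * L * t ^ 2 / (2 * α * (t / Real.sqrt s) ^ 2) -
          (β + η * L * β ^ 2 / (2 * α) + η * L * β / 2) = 0 := by
        rw [div_pow, hsq]
        rw [sub_eq_zero]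
        rw [hs_def]
        field_simp
        ring
      rw [hbr, mul_zero]
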